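/- Let G be a finite simple graph with vertex set V, x ∈ V, p : V → [0,1] reliabilities, and T ⊆ V∖{x}. Define p' : V → [0,1] by p'_j = 0 for j ∈ T and p'_j = p_j otherwise. Then Sh[v̄_{NC1}](x) evaluated at reliabilities p' is greater than or equal to Sh[v̄_{NC1}](x) evaluated at reliabilities p. In other words, no removal attack on the centrality of a player in the game Γ_{NC1} can decrease its Shapley value. -/
import Mathlib


open Finset

attribute [local instance] Classical.propDecidable

noncomputable section

/-- `Π_{T,S}(p) = (∏_{i∈T} p i) * (∏_{i∈S\T} (1 - p i))`. -/
def prodPi {α : Type*} (p : α → ℝ) (T S : Finset α) : ℝ :=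
  (∏ i ∈ T, p i) * (∏ i ∈ S \ T, (1 - p i))

/-- Reliability extension of a TU-game. -/
def relExt {α : Type*} (p : α → ℝ) (v : Finset α → ℝ) (S : Finset α) : ℝ :=
  ∑ T ∈ S.powerset, v T * prodPi p T S

/-- The set of players preceding `x` in the ordering `σ`. -/
def precedingSet {α : Type*} [Fintype α] (σ : Fin (Fintype.card α) ≃ α) (x : α) : Finset α :=
  Finset.univ.filter fun y => σ.symm y < σ.symm x

/-- The Shapley value of player `x` in the TU-game `v`. -/
def shapley {α : Type*} [Fintype α] (v : Finset α → ℝ) (x : α) : ℝ :=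
  (1 / ((Fintype.card α).factorial : ℝ)) *
    ∑ σ : Fin (Fintype.card α) ≃ α,
      (v (insert x (precedingSet σ x)) - v (precedingSet σ x))

/-- The (open) neighborhood of `v` as a finset. -/
def nbhd {α : Type*} [Fintype α] (G : SimpleGraph α) (v : α) : Finset α :=
  Finset.univ.filter fun y => G.Adj v y

/-- `N̂(v) = {v} ∪ N(v)`. -/
def closedNbhd {α : Type*} [Fintype α] (G : SimpleGraph α) (v : α) : Finset α :=
  insert v (nbhd G v)

/-- `δ(S)`: vertices outside `S` having a neighbor in `S`. -/
def extBoundary {α : Type*} [Fintype α] (G : SimpleGraph α) (S : Finset α) : Finset α :=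
  Finset.univ.filter fun y => y ∉ S ∧ ∃ x ∈ S, G.Adj x y

/-- The network centrality game `Γ_{NC1}`: `v(S) = |S ∪ δ(S)|`. -/
def vNC1 {α : Type*} [Fintype α] (G : SimpleGraph α) (S : Finset α) : ℝ :=
  ((S ∪ extBoundary G S).card : ℝ)


lemma sum_prodPi {α : Type*} (p : α → ℝ) (S : Finset α) :
    ∑ T ∈ S.powerset, prodPi p T S = 1 := by
  simp only [prodPi]
  rw [← Finset.prod_add]
  simp

lemma sum_prodPi_disj {α : Type*} (p : α → ℝ) (S A : Finset α) :
    ∑ T ∈ (S \ A).powerset, prodPi p T S = ∏ i ∈ S ∩ A, (1 - p i) := by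
  have key : ∀ T ∈ (S \ A).powerset,
      prodPi p T S = prodPi p T (S \ A) * ∏ i ∈ S ∩ A, (1 - p i) := by
    intro T hT
    rw [mem_powerset] at hT
    unfold prodPi
    have hdecomp : S \ T = ((S \ A) \ T) ∪ (S ∩ A) := by
      ext i
      simp only [mem_sdiff, mem_union, mem_inter]
      constructor
      · rintro ⟨hiS, hiT⟩
        by_cases hiA : i ∈ A
        · right; exact ⟨hiS, hiA⟩
        · left; exact ⟨⟨hiS, hiA⟩, hiT⟩
      · rintro (⟨⟨hiS, _⟩, hiT⟩ | ⟨hiS, hiA⟩)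
        · exact ⟨hiS, hiT⟩
        · exact ⟨hiS, fun hiT => ((mem_sdiff.mp (hT hiT)).2 hiA)⟩
    have hdisj : Disjoint ((S \ A) \ T) (S ∩ A) := by
      rw [Finset.disjoint_left]
      intro i hi hi2
      exact (mem_sdiff.mp (mem_sdiff.mp hi).1).2 (mem_inter.mp hi2).2
    rw [hdecomp, prod_union hdisj]; ring
  rw [Finset.sum_congr rfl key, ← Finset.sum_mul, sum_prodPi p (S \ A), one_mul]

lemma sum_indicator_prodPi {α : Type*} (p : α → ℝ) (S A : Finset α) :
    ∑ T ∈ S.powerset, (if (T ∩ A).Nonempty then (1:ℝ) else 0) * prodPi p T S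
      = 1 - ∏ i ∈ S ∩ A, (1 - p i) := by
  have hsplit : ∀ T ∈ S.powerset, (if (T ∩ A).Nonempty then (1:ℝ) else 0) * prodPi p T S
      = prodPi p T S - (if T ∩ A = ∅ then prodPi p T S else 0) := by
    intro T _
    by_cases h : (T ∩ A).Nonempty
    · rw [if_pos h, if_neg (Finset.nonempty_iff_ne_empty.mp h)]; ring
    · rw [if_neg h, if_pos (Finset.not_nonempty_iff_eq_empty.mp h)]; ring
  rw [Finset.sum_congr rfl hsplit, Finset.sum_sub_distrib, sum_prodPi]
  congr 1
  rw [← Finset.sum_filter]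
  have hfe : S.powerset.filter (fun T => T ∩ A = ∅) = (S \ A).powerset := by
    ext U
    rw [mem_filter, mem_powerset, mem_powerset, Finset.subset_sdiff,
      Finset.disjoint_iff_inter_eq_empty]
  rw [hfe, sum_prodPi_disj]

lemma vNC1_eq_sum {α : Type*} [Fintype α] (G : SimpleGraph α) (S : Finset α) :
    vNC1 G S = ∑ u : α, (if (S ∩ closedNbhd G u).Nonempty then (1:ℝ) else 0) := by
  unfold vNC1
  have hset : S ∪ extBoundary G S
      = Finset.univ.filter (fun u => (S ∩ closedNbhd G u).Nonempty) := by
    ext u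
    simp only [mem_union, extBoundary, mem_filter, mem_univ, true_and, closedNbhd, nbhd,
      Finset.Nonempty, mem_inter, mem_insert]
    constructor
    · rintro (h | ⟨hu, w, hwS, hadj⟩)
      · exact ⟨u, h, Or.inl rfl⟩
      · exact ⟨w, hwS, Or.inr hadj.symm⟩
    · rintro ⟨w, hwS, (h | h)⟩
      · subst h; exact Or.inl hwS
      · by_cases hu : u ∈ S
        · exact Or.inl hu
        · exact Or.inr ⟨hu, w, hwS, h.symm⟩
  rw [hset, Finset.card_filter]
  push_cast
  rfl

lemma relExt_vNC1 {α : Type*} [Fintype α] (G : SimpleGraph α)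
    (p : α → ℝ) (S : Finset α) :
    relExt p (vNC1 G) S = ∑ u : α, (1 - ∏ i ∈ S ∩ closedNbhd G u, (1 - p i)) := by
  unfold relExt
  have : ∀ U ∈ S.powerset, vNC1 G U * prodPi p U S
      = ∑ u : α, (if (U ∩ closedNbhd G u).Nonempty then (1:ℝ) else 0) * prodPi p U S := by
    intro U _
    rw [vNC1_eq_sum, Finset.sum_mul]
  rw [Finset.sum_congr rfl this, Finset.sum_comm]
  exact Finset.sum_congr rfl fun u _ => sum_indicator_prodPi p S (closedNbhd G u)

lemma marginal_eq {α : Type*} [Fintype α] (G : SimpleGraph α)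
    (p : α → ℝ) (x : α) (S : Finset α) (hx : x ∉ S) :
    relExt p (vNC1 G) (insert x S) - relExt p (vNC1 G) S
      = ∑ u : α, (if x ∈ closedNbhd G u
          then p x * ∏ i ∈ S ∩ closedNbhd G u, (1 - p i) else 0) := by
  rw [relExt_vNC1, relExt_vNC1, ← Finset.sum_sub_distrib]
  refine Finset.sum_congr rfl fun u _ => ?_
  by_cases h : x ∈ closedNbhd G u
  · rw [if_pos h]
    have h1 : insert x S ∩ closedNbhd G u = insert x (S ∩ closedNbhd G u) := by
      rw [Finset.insert_inter_of_mem h]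
    rw [h1, Finset.prod_insert (fun hc => hx (Finset.mem_inter.mp hc).1)]
    ring
  · rw [if_neg h, Finset.insert_inter_of_notMem h]; ring


theorem stmt_8 {α : Type*} [Fintype α] [DecidableEq α] (G : SimpleGraph α)
    (x : α) (p : α → ℝ) (hp : ∀ i, p i ∈ Set.Icc (0 : ℝ) 1)
    (T : Finset α) (hT : x ∉ T) :
    shapley (relExt p (vNC1 G)) x ≤
      shapley (relExt (fun j => if j ∈ T then 0 else p j) (vNC1 G)) x := by
  set p' : α → ℝ := fun j => if j ∈ T then 0 else p j with hp'def
  unfold shapley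
  have hfac : (0:ℝ) ≤ 1 / ((Fintype.card α).factorial : ℝ) := by positivity
  refine mul_le_mul_of_nonneg_left ?_ hfac
  refine Finset.sum_le_sum fun σ _ => ?_
  have hx : x ∉ precedingSet σ x := by simp [precedingSet]
  rw [marginal_eq G p x _ hx, marginal_eq G p' x _ hx]
  refine Finset.sum_le_sum fun u _ => ?_
  by_cases h : x ∈ closedNbhd G u
  · rw [if_pos h, if_pos h]
    have hpx : p' x = p x := by simp [hp'def, hT]
    rw [hpx]
    refine mul_le_mul_of_nonneg_left ?_ (hp x).1
    refine Finset.prod_le_prod (fun i _ => by linarith [(hp i).2]) (fun i _ => ?_)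
    by_cases hi : i ∈ T
    · simp only [hp'def, if_pos hi]
      linarith [(hp i).1]
    · simp [hp'def, hi]
  · rw [if_neg h, if_neg h]

end
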